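/- Let σ > 0, 0 < ρ < 1, m > 0, K > 0, and r₁, r₂ ≥ 0. Then the family of nonnegative terms (k,i,n) ↦ α(k,i,n) r₁^{2n+1} r₂^{2(i−n)+1}, indexed over triples of naturals with 0 ≤ n ≤ i ≤ k, is summable; consequently the closed-form power series for the bivariate Rician shadowed joint PDF converges absolutely at every (r₁,r₂). -/
import Mathlib


open MeasureTheory

/-- Pochhammer symbol (ascending factorial) `(m)_k = m (m+1) ⋯ (m+k-1)`. -/
noncomputable def poch (m : ℝ) (k : ℕ) : ℝ := ∏ j ∈ Finset.range k, (m + j)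

/-- Modified Bessel function of the first kind of order zero,
`I₀(y) = ∑ (y/2)^{2n} / (n!)²`. -/
noncomputable def I0 (y : ℝ) : ℝ := ∑' n : ℕ, (y / 2) ^ (2 * n) / (Nat.factorial n : ℝ) ^ 2

/-- Confluent hypergeometric function `₁F₁(m, 1; z) = ∑ (m)_n zⁿ / (n!)²`. -/
noncomputable def F11 (m z : ℝ) : ℝ := ∑' n : ℕ, poch m n * z ^ n / (Nat.factorial n : ℝ) ^ 2

/-- Series coefficient `α(k,i,n)` of the bivariate Rician shadowed joint PDF. -/
noncomputable def alpha (σ ρ m K : ℝ) (k i n : ℕ) : ℝ :=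
  (8 * Real.rpow (m * ρ / (m * ρ + K)) m / (σ ^ 6 * ρ * (1 - ρ) ^ 2)) *
  (poch m (k - i) * (K / (σ ^ 2 * ρ * (ρ * m + K))) ^ (k - i) /
    (Nat.factorial (k - i) : ℝ) ^ 2) *
  (1 / ((Nat.factorial n : ℝ) ^ 2 * (Nat.factorial (i - n) : ℝ) ^ 2 *
    (σ ^ 2 * (1 - ρ)) ^ (2 * i))) *
  ((Nat.factorial k : ℝ) / (2 * ((1 + ρ) / (σ ^ 2 * ρ * (1 - ρ))) ^ (k + 1)))

/-- Closed-form power series of the bivariate Rician shadowed joint PDF. -/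
noncomputable def fpdf (σ ρ m K r₁ r₂ : ℝ) : ℝ :=
  ∑' k : ℕ, ∑ i ∈ Finset.range (k + 1), ∑ n ∈ Finset.range (i + 1),
    alpha σ ρ m K k i n * r₁ ^ (2 * n + 1) * r₂ ^ (2 * (i - n) + 1) *
      Real.exp (-(r₁ ^ 2 + r₂ ^ 2) / (σ ^ 2 * (1 - ρ)))

/-- `G(j,l,q,γ) = (−1)^j γ^{2(l+j+1)} q! (σ²(1−ρ))^{q+1−j} / (j!·4(l+j+1))`. -/
noncomputable def Gfun (σ ρ : ℝ) (j l q : ℕ) (γ : ℝ) : ℝ :=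
  (-1 : ℝ) ^ j * γ ^ (2 * (l + j + 1)) * (Nat.factorial q : ℝ) *
    (σ ^ 2 * (1 - ρ)) ^ ((q : ℤ) + 1 - (j : ℤ)) /
    ((Nat.factorial j : ℝ) * (4 * (l + j + 1)))

/-- `Ḡ(λ,k)`, the `(2(k+1))`-th moment of the BPP distance distribution. -/
noncomputable def Gbar (Dalt ra lam : ℝ) (k : ℕ) : ℝ :=
  ((Dalt ^ 2 + lam ^ 2 + ra ^ 2) ^ (k + 2) - (Dalt ^ 2 + lam ^ 2) ^ (k + 2)) /
    (ra ^ 2 * (k + 2))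

private lemma choose_le_bound {θ : ℝ} (h0 : 0 < θ) (h1 : θ < 1) (a b : ℕ) :
    ((a + b).choose b : ℝ) ≤ (1 / θ) ^ b * (1 / (1 - θ)) ^ a := by
  have h1' : 0 < 1 - θ := by linarith
  have key : ((a + b).choose b : ℝ) * (θ ^ b * (1 - θ) ^ a) ≤ 1 := by
    have hsum := add_pow θ (1 - θ) (a + b)
    have hterm : θ ^ b * (1 - θ) ^ (a + b - b) * ((a + b).choose b : ℝ) ≤
        ∑ k ∈ Finset.range (a + b + 1),
          θ ^ k * (1 - θ) ^ (a + b - k) * ((a + b).choose k : ℝ) :=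
      Finset.single_le_sum (f := fun k => θ ^ k * (1 - θ) ^ (a + b - k) * ((a + b).choose k : ℝ))
        (fun k _ => mul_nonneg (mul_nonneg (pow_nonneg h0.le _) (pow_nonneg h1'.le _))
          (Nat.cast_nonneg _))
        (Finset.mem_range.2 (Nat.lt_succ_of_le (Nat.le_add_left b a)))
    rw [← hsum] at hterm
    simp only [Nat.add_sub_cancel] at hterm
    calc ((a + b).choose b : ℝ) * (θ ^ b * (1 - θ) ^ a)
        = θ ^ b * (1 - θ) ^ a * ((a + b).choose b : ℝ) := by ring
      _ ≤ (θ + (1 - θ)) ^ (a + b) := hterm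
      _ = 1 := by norm_num
  have hpos : (0:ℝ) < θ ^ b * (1 - θ) ^ a := by positivity
  rw [div_pow, div_pow, one_pow, one_pow, div_mul_div_comm, le_div_iff₀ hpos]
  simpa [mul_comm] using key

private lemma poch_nonneg {m : ℝ} (hm : 0 ≤ m) (j : ℕ) : 0 ≤ poch m j :=
  Finset.prod_nonneg fun i _ => add_nonneg hm (Nat.cast_nonneg i)

private lemma poch_mono {m m' : ℝ} (hm : 0 ≤ m) (h : m ≤ m') (j : ℕ) :
    poch m j ≤ poch m' j :=
  Finset.prod_le_prod (fun i _ => add_nonneg hm (Nat.cast_nonneg i))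
    (fun i _ => by linarith)

private lemma poch_nat_eq (M : ℕ) (hM : 1 ≤ M) (j : ℕ) :
    poch (M : ℝ) j * (Nat.factorial (M - 1) : ℝ) = (Nat.factorial (M - 1 + j) : ℝ) := by
  induction j with
  | zero => simp [poch]
  | succ j ih =>
    rw [poch, Finset.prod_range_succ, ← poch]
    have h1 : M - 1 + (j + 1) = (M - 1 + j) + 1 := by omega
    have h2 : ((M - 1 + j : ℕ) : ℝ) + 1 = (M : ℝ) + j := by
      push_cast [Nat.cast_sub hM]; ring
    rw [h1, Nat.factorial_succ, Nat.cast_mul, Nat.cast_add_one, h2]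
    linear_combination ((M : ℝ) + j) * ih

private lemma poch_le_bound {m θ : ℝ} (hm : 0 < m) (h0 : 0 < θ) (h1 : θ < 1) (j : ℕ) :
    poch m j ≤ (1 / (1 - θ)) ^ (⌈m⌉₊ - 1) * ((1 / θ) ^ j * (Nat.factorial j : ℝ)) := by
  set M := ⌈m⌉₊ with hM_def
  have hM1 : 1 ≤ M := Nat.one_le_ceil_iff.2 hm
  have hmono : poch m j ≤ poch (M : ℝ) j := poch_mono hm.le (Nat.le_ceil m) j
  have heq : poch (M : ℝ) j = ((M - 1 + j).choose j : ℝ) * (Nat.factorial j : ℝ) := by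
    have hfac : (0:ℝ) < (Nat.factorial (M - 1) : ℝ) := by positivity
    have h3 := Nat.choose_mul_factorial_mul_factorial (Nat.le_add_left j (M - 1))
    rw [Nat.add_sub_cancel] at h3
    have h4 : (((M - 1 + j).choose j : ℕ) : ℝ) * (Nat.factorial j : ℝ) *
        (Nat.factorial (M - 1) : ℝ) = (Nat.factorial (M - 1 + j) : ℝ) := by
      exact_mod_cast congrArg (Nat.cast : ℕ → ℝ) h3
    have h5 := poch_nat_eq M hM1 j
    exact mul_right_cancel₀ hfac.ne' (h5.trans h4.symm)
  have hch := choose_le_bound h0 h1 (M - 1) j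
  calc poch m j ≤ poch (M : ℝ) j := hmono
    _ = ((M - 1 + j).choose j : ℝ) * (Nat.factorial j : ℝ) := heq
    _ ≤ (1 / θ) ^ j * (1 / (1 - θ)) ^ (M - 1) * (Nat.factorial j : ℝ) := by
        apply mul_le_mul_of_nonneg_right hch (Nat.cast_nonneg _)
    _ = (1 / (1 - θ)) ^ (M - 1) * ((1 / θ) ^ j * (Nat.factorial j : ℝ)) := by ring

private lemma factorial_split (n l j : ℕ) :
    (Nat.factorial (n + l + j) : ℝ) =
      ((n + l + j).choose j : ℝ) * ((n + l).choose n : ℝ) *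
        (Nat.factorial n : ℝ) * (Nat.factorial l : ℝ) * (Nat.factorial j : ℝ) := by
  have h1 : (n + l + j).choose j * (Nat.factorial j) * (Nat.factorial (n + l)) =
      Nat.factorial (n + l + j) := by
    have := Nat.choose_mul_factorial_mul_factorial (Nat.le_add_left j (n + l))
    simpa [Nat.add_sub_cancel] using this
  have h2 : (n + l).choose n * (Nat.factorial n) * (Nat.factorial l) =
      Nat.factorial (n + l) := by
    have := Nat.choose_mul_factorial_mul_factorial (Nat.le_add_right n l)
    simpa [Nat.add_sub_cancel_left] using this
  rw [← h1, ← h2]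
  push_cast
  ring

set_option maxHeartbeats 1000000 in
private lemma key_bound {A c s B θ m r₁ r₂ : ℝ}
    (hA : 0 ≤ A) (hc : 0 < c) (hs : 0 < s) (hB : 0 < B)
    (hθ0 : 0 < θ) (hθ1 : θ < 1) (hm : 0 < m) (hr₁ : 0 ≤ r₁) (hr₂ : 0 ≤ r₂)
    (n l j : ℕ) :
    A * (poch m j * c ^ j / (Nat.factorial j : ℝ) ^ 2) *
      (1 / ((Nat.factorial n : ℝ) ^ 2 * (Nat.factorial l : ℝ) ^ 2 * s ^ (2 * (n + l)))) *
      ((Nat.factorial (n + l + j) : ℝ) / (2 * B ^ (n + l + j + 1))) *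
      r₁ ^ (2 * n + 1) * r₂ ^ (2 * l + 1) ≤
    (A * r₁ * r₂ / (2 * B) * (1 / (1 - θ)) ^ (⌈m⌉₊ - 1)) *
      ((2 * (r₁ ^ 2 / s ^ 2) / (B * (1 - θ))) ^ n / (Nat.factorial n : ℝ) *
        ((2 * (r₂ ^ 2 / s ^ 2) / (B * (1 - θ))) ^ l / (Nat.factorial l : ℝ) *
          (c / B / θ ^ 2) ^ j)) := by
  have h1θ : (0:ℝ) < 1 - θ := by linarith
  have hpj : poch m j ≤ (1 / (1 - θ)) ^ (⌈m⌉₊ - 1) * ((1 / θ) ^ j * (Nat.factorial j : ℝ)) :=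
    poch_le_bound hm hθ0 hθ1 j
  have hch1 : ((n + l + j).choose j : ℝ) ≤ (1 / θ) ^ j * (1 / (1 - θ)) ^ (n + l) :=
    choose_le_bound hθ0 hθ1 (n + l) j
  have hch2 : ((n + l).choose n : ℝ) ≤ (2:ℝ) ^ n * 2 ^ l := by
    have h := choose_le_bound (θ := 1/2) (by norm_num) (by norm_num) l n
    rw [Nat.add_comm l n] at h
    norm_num at h
    exact h
  rw [factorial_split n l j]
  have hX2 : poch m j * c ^ j / (Nat.factorial j : ℝ) ^ 2 ≤
      (1 / (1 - θ)) ^ (⌈m⌉₊ - 1) * ((1 / θ) ^ j * (Nat.factorial j : ℝ)) * c ^ j /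
        (Nat.factorial j : ℝ) ^ 2 := by
    gcongr
  have hX4 : ((n + l + j).choose j : ℝ) * ((n + l).choose n : ℝ) * (Nat.factorial n : ℝ) *
        (Nat.factorial l : ℝ) * (Nat.factorial j : ℝ) / (2 * B ^ (n + l + j + 1)) ≤
      ((1 / θ) ^ j * (1 / (1 - θ)) ^ (n + l)) * ((2:ℝ) ^ n * 2 ^ l) * (Nat.factorial n : ℝ) *
        (Nat.factorial l : ℝ) * (Nat.factorial j : ℝ) / (2 * B ^ (n + l + j + 1)) := by
    gcongr
  have hX2' : 0 ≤ poch m j * c ^ j / (Nat.factorial j : ℝ) ^ 2 :=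
    div_nonneg (mul_nonneg (poch_nonneg hm.le j) (pow_nonneg hc.le j)) (by positivity)
  have hX4' : 0 ≤ ((1 / θ) ^ j * (1 / (1 - θ)) ^ (n + l)) * ((2:ℝ) ^ n * 2 ^ l) *
      (Nat.factorial n : ℝ) * (Nat.factorial l : ℝ) * (Nat.factorial j : ℝ) /
      (2 * B ^ (n + l + j + 1)) := by positivity
  have hR : (0:ℝ) ≤ A *
      (1 / ((Nat.factorial n : ℝ) ^ 2 * (Nat.factorial l : ℝ) ^ 2 * s ^ (2 * (n + l)))) *
      r₁ ^ (2 * n + 1) * r₂ ^ (2 * l + 1) := by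
    have h1 : (0:ℝ) ≤ 1 / ((Nat.factorial n : ℝ) ^ 2 * (Nat.factorial l : ℝ) ^ 2 *
        s ^ (2 * (n + l))) :=
      one_div_nonneg.2 (mul_nonneg (by positivity) (pow_nonneg hs.le _))
    exact mul_nonneg (mul_nonneg (mul_nonneg hA h1) (pow_nonneg hr₁ _)) (pow_nonneg hr₂ _)
  calc A * (poch m j * c ^ j / (Nat.factorial j : ℝ) ^ 2) *
        (1 / ((Nat.factorial n : ℝ) ^ 2 * (Nat.factorial l : ℝ) ^ 2 * s ^ (2 * (n + l)))) *
        (((n + l + j).choose j : ℝ) * ((n + l).choose n : ℝ) * (Nat.factorial n : ℝ) *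
          (Nat.factorial l : ℝ) * (Nat.factorial j : ℝ) / (2 * B ^ (n + l + j + 1))) *
        r₁ ^ (2 * n + 1) * r₂ ^ (2 * l + 1)
      = (poch m j * c ^ j / (Nat.factorial j : ℝ) ^ 2) *
        (((n + l + j).choose j : ℝ) * ((n + l).choose n : ℝ) * (Nat.factorial n : ℝ) *
          (Nat.factorial l : ℝ) * (Nat.factorial j : ℝ) / (2 * B ^ (n + l + j + 1))) *
        (A * (1 / ((Nat.factorial n : ℝ) ^ 2 * (Nat.factorial l : ℝ) ^ 2 *
          s ^ (2 * (n + l)))) * r₁ ^ (2 * n + 1) * r₂ ^ (2 * l + 1)) := by ring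
    _ ≤ ((1 / (1 - θ)) ^ (⌈m⌉₊ - 1) * ((1 / θ) ^ j * (Nat.factorial j : ℝ)) * c ^ j /
          (Nat.factorial j : ℝ) ^ 2) *
        (((1 / θ) ^ j * (1 / (1 - θ)) ^ (n + l)) * ((2:ℝ) ^ n * 2 ^ l) *
          (Nat.factorial n : ℝ) * (Nat.factorial l : ℝ) * (Nat.factorial j : ℝ) /
          (2 * B ^ (n + l + j + 1))) *
        (A * (1 / ((Nat.factorial n : ℝ) ^ 2 * (Nat.factorial l : ℝ) ^ 2 *
          s ^ (2 * (n + l)))) * r₁ ^ (2 * n + 1) * r₂ ^ (2 * l + 1)) :=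
      mul_le_mul_of_nonneg_right (mul_le_mul hX2 hX4 (div_nonneg (by positivity)
        (by positivity)) (le_trans hX2' hX2)) hR
    _ = (A * r₁ * r₂ / (2 * B) * (1 / (1 - θ)) ^ (⌈m⌉₊ - 1)) *
        ((2 * (r₁ ^ 2 / s ^ 2) / (B * (1 - θ))) ^ n / (Nat.factorial n : ℝ) *
          ((2 * (r₂ ^ 2 / s ^ 2) / (B * (1 - θ))) ^ l / (Nat.factorial l : ℝ) *
            (c / B / θ ^ 2) ^ j)) := by
        have hfn : (Nat.factorial n : ℝ) ≠ 0 := by positivity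
        have hfl : (Nat.factorial l : ℝ) ≠ 0 := by positivity
        have hfj : (Nat.factorial j : ℝ) ≠ 0 := by positivity
        have hs' : s ≠ 0 := hs.ne'
        have hB' : B ≠ 0 := hB.ne'
        have hθ' : θ ≠ 0 := hθ0.ne'
        have h1θ' : (1 - θ) ≠ 0 := h1θ.ne'
        simp only [div_pow, mul_pow]
        field_simp
        ring

private def tripleEquiv : (ℕ × ℕ × ℕ) ≃ {p : ℕ × ℕ × ℕ // p.2.2 ≤ p.2.1 ∧ p.2.1 ≤ p.1} where
  toFun q := ⟨(q.1 + q.2.1 + q.2.2, q.1 + q.2.1, q.1),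
    ⟨Nat.le_add_right _ _, Nat.le_add_right _ _⟩⟩
  invFun p := (p.val.2.2, p.val.2.1 - p.val.2.2, p.val.1 - p.val.2.1)
  left_inv q := by obtain ⟨n, l, j⟩ := q; simp
  right_inv p := by
    obtain ⟨⟨k, i, n⟩, h1, h2⟩ := p
    dsimp only at h1 h2 ⊢
    refine Subtype.ext ?_
    show (n + (i - n) + (k - i), n + (i - n), n) = (k, i, n)
    have hk : n + (i - n) + (k - i) = k := by omega
    have hi : n + (i - n) = i := by omega
    rw [hk, hi]

set_option maxHeartbeats 2000000 in
theorem pdf_series_summable (σ ρ m K r₁ r₂ : ℝ)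
    (hσ : 0 < σ) (hρ0 : 0 < ρ) (hρ1 : ρ < 1) (hm : 0 < m) (hK : 0 < K)
    (hr₁ : 0 ≤ r₁) (hr₂ : 0 ≤ r₂) :
    Summable (fun p : {p : ℕ × ℕ × ℕ // p.2.2 ≤ p.2.1 ∧ p.2.1 ≤ p.1} =>
      alpha σ ρ m K p.val.1 p.val.2.1 p.val.2.2 *
        r₁ ^ (2 * p.val.2.2 + 1) * r₂ ^ (2 * (p.val.2.1 - p.val.2.2) + 1)) := by
  have h1ρ : (0:ℝ) < 1 - ρ := by linarith
  set s : ℝ := σ ^ 2 * (1 - ρ) with hs_def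
  have hs : 0 < s := mul_pos (pow_pos hσ 2) h1ρ
  set c : ℝ := K / (σ ^ 2 * ρ * (ρ * m + K)) with hc_def
  have hcden : (0:ℝ) < σ ^ 2 * ρ * (ρ * m + K) :=
    mul_pos (mul_pos (pow_pos hσ 2) hρ0) (add_pos (mul_pos hρ0 hm) hK)
  have hc : 0 < c := div_pos hK hcden
  set B : ℝ := (1 + ρ) / (σ ^ 2 * ρ * (1 - ρ)) with hB_def
  have hbden : (0:ℝ) < σ ^ 2 * ρ * (1 - ρ) := mul_pos (mul_pos (pow_pos hσ 2) hρ0) h1ρ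
  have hB : 0 < B := div_pos (by linarith) hbden
  set w : ℝ := c / B / 1 with hw_def'
  have hw_def : w = c / B := by rw [hw_def']; ring
  have hw0 : 0 < w := by rw [hw_def]; exact div_pos hc hB
  have hw1 : w < 1 := by
    rw [hw_def, div_lt_one hB, hc_def, hB_def, div_lt_div_iff₀ hcden hbden]
    nlinarith [mul_pos (mul_pos (pow_pos hσ 2) hρ0)
      (by nlinarith : (0:ℝ) < ρ * m + ρ ^ 2 * m + 2 * K * ρ)]
  set θ : ℝ := (1 + w) / 2 with hθ_def
  have hθ0 : 0 < θ := by rw [hθ_def]; linarith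
  have hθ1 : θ < 1 := by rw [hθ_def]; linarith
  have h1θ : (0:ℝ) < 1 - θ := by linarith
  set Q : ℝ := c / B / θ ^ 2 with hQ_def
  have hQw : Q = w / θ ^ 2 := by rw [hQ_def, hw_def]
  have hQ0 : 0 < Q := by rw [hQw]; exact div_pos hw0 (by positivity)
  have hQ1 : Q < 1 := by
    rw [hQw, div_lt_one (by positivity), hθ_def]
    nlinarith [mul_pos (sub_pos.2 hw1) (sub_pos.2 hw1)]
  set P1 : ℝ := 2 * (r₁ ^ 2 / s ^ 2) / (B * (1 - θ)) with hP1_def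
  set P2 : ℝ := 2 * (r₂ ^ 2 / s ^ 2) / (B * (1 - θ)) with hP2_def
  have hP1 : 0 ≤ P1 := by
    rw [hP1_def]
    exact div_nonneg (by positivity) (mul_pos hB h1θ).le
  have hP2 : 0 ≤ P2 := by
    rw [hP2_def]
    exact div_nonneg (by positivity) (mul_pos hB h1θ).le
  set A : ℝ := 8 * Real.rpow (m * ρ / (m * ρ + K)) m / (σ ^ 6 * ρ * (1 - ρ) ^ 2)
    with hA_def
  have hX : (0:ℝ) ≤ m * ρ / (m * ρ + K) :=
    (div_pos (mul_pos hm hρ0) (add_pos (mul_pos hm hρ0) hK)).le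
  have hA : 0 ≤ A := by
    rw [hA_def]
    exact div_nonneg (mul_nonneg (by norm_num) (Real.rpow_nonneg hX m))
      (mul_nonneg (mul_nonneg (pow_nonneg hσ.le 6) hρ0.le) (sq_nonneg _))
  set C₀ : ℝ := A * r₁ * r₂ / (2 * B) * (1 / (1 - θ)) ^ (⌈m⌉₊ - 1) with hC₀_def
  have halpha : ∀ k i n : ℕ, 0 ≤ alpha σ ρ m K k i n := by
    intro k i n
    unfold alpha
    rw [← hA_def, ← hc_def, ← hB_def, ← hs_def]
    have h2 : 0 ≤ poch m (k - i) * c ^ (k - i) / (Nat.factorial (k - i) : ℝ) ^ 2 :=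
      div_nonneg (mul_nonneg (poch_nonneg hm.le _) (pow_nonneg hc.le _)) (by positivity)
    have h3 : 0 ≤ 1 / ((Nat.factorial n : ℝ) ^ 2 * (Nat.factorial (i - n) : ℝ) ^ 2 *
        s ^ (2 * i)) :=
      one_div_nonneg.2 (mul_nonneg (by positivity) (pow_nonneg hs.le _))
    have h4 : 0 ≤ (Nat.factorial k : ℝ) / (2 * B ^ (k + 1)) :=
      div_nonneg (Nat.cast_nonneg _) (by positivity)
    exact mul_nonneg (mul_nonneg (mul_nonneg hA h2) h3) h4
  apply (Equiv.summable_iff tripleEquiv).mp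
  apply Summable.of_nonneg_of_le (f := fun q : ℕ × ℕ × ℕ =>
    C₀ * (P1 ^ q.1 / (Nat.factorial q.1 : ℝ) *
      (P2 ^ q.2.1 / (Nat.factorial q.2.1 : ℝ) * Q ^ q.2.2)))
  · intro q
    obtain ⟨n, l, j⟩ := q
    simp only [Function.comp_apply, tripleEquiv, Equiv.coe_fn_mk]
    exact mul_nonneg (mul_nonneg (halpha _ _ _) (pow_nonneg hr₁ _)) (pow_nonneg hr₂ _)
  · intro q
    obtain ⟨n, l, j⟩ := q
    simp only [Function.comp_apply, tripleEquiv, Equiv.coe_fn_mk]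
    have e1 : n + l + j - (n + l) = j := by omega
    have e2 : n + l - n = l := by omega
    unfold alpha
    rw [e1, e2, ← hA_def, ← hc_def, ← hB_def, ← hs_def, hC₀_def, hP1_def, hP2_def, hQ_def]
    exact key_bound hA hc hs hB hθ0 hθ1 hm hr₁ hr₂ n l j
  · apply Summable.mul_left
    have h1 := Real.summable_pow_div_factorial P1
    have h2 := Real.summable_pow_div_factorial P2
    have h3 := summable_geometric_of_lt_one hQ0.le hQ1
    have h23 := h2.mul_of_nonneg h3
      (fun l => div_nonneg (pow_nonneg hP2 _) (Nat.cast_nonneg _))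
      (fun j => pow_nonneg hQ0.le _)
    exact h1.mul_of_nonneg h23
      (fun n => div_nonneg (pow_nonneg hP1 _) (Nat.cast_nonneg _))
      (fun x => mul_nonneg (div_nonneg (pow_nonneg hP2 _) (Nat.cast_nonneg _))
        (pow_nonneg hQ0.le _))
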